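/- Let F : H → (−∞,∞] be proper, let (x_k)_{k≥1} be a sequence in H with F(x_k) finite for all k ≥ 2 and F(x_1) < ∞, let (s_j)_{j≥2} be nonnegative reals, and let C > 0, a ≥ 0 and u ∈ H. Suppose that for every x̃ ∈ H with F(x̃) < ∞ and every k ≥ 1: F(x_{k+1}) − F(x̃) ≤ C(a(F(x_1) − F(x̃)) + ‖u − x̃‖² + Σ_{j=2}^{k+1} s_j)/(k+1)². If lim_{k→∞} (Σ_{j=2}^{k+1} s_j)/(k+1)² = 0, then lim_{k→∞} F(x_k) = inf_{x∈H} F(x) (as a limit in the extended reals [−∞,∞]; in particular this holds also when inf_H F = −∞). -/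

import Mathlib

/-- Step 8 of the convergence proof: if the rate estimate holds for every point `x̃` with
finite value and the averaged error tolerances tend to zero, then `F(x_k) → inf_H F`
in the extended reals (also when `inf F = −∞`). -/
theorem perturbed_fista_value_convergence
    {H : Type*} [NormedAddCommGroup H] [InnerProductSpace ℝ H] [CompleteSpace H]
    (F : H → EReal) (hbot : ∀ z : H, F z ≠ ⊥) (hproper : ∃ z : H, F z ≠ ⊤)
    (x : ℕ → H)
    (Fx1 : ℝ) (hFx1 : F (x 1) = (Fx1 : EReal))
    (hfin : ∀ k : ℕ, 2 ≤ k → F (x k) ≠ ⊤)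
    (s : ℕ → ℝ) (hs : ∀ j : ℕ, 2 ≤ j → 0 ≤ s j)
    (C a : ℝ) (hC : 0 < C) (ha : 0 ≤ a) (u : H)
    (hmain : ∀ xt : H, ∀ Fxt : ℝ, F xt = (Fxt : EReal) → ∀ k : ℕ, 1 ≤ k →
      F (x (k + 1)) ≤
        ((Fxt + C * (a * (Fx1 - Fxt) + ‖u - xt‖ ^ 2 +
          ∑ j ∈ Finset.Icc 2 (k + 1), s j) / ((k : ℝ) + 1) ^ 2 : ℝ) : EReal))
    (hlim : Filter.Tendsto
      (fun k : ℕ => (∑ j ∈ Finset.Icc 2 (k + 1), s j) / ((k : ℝ) + 1) ^ 2)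
      Filter.atTop (nhds 0)) :
    Filter.Tendsto (fun k : ℕ => F (x k)) Filter.atTop (nhds (⨅ z : H, F z)) := by
  have hinv : Filter.Tendsto (fun k : ℕ => (((k : ℝ) + 1) ^ 2)⁻¹)
      Filter.atTop (nhds 0) := by
    apply Filter.Tendsto.inv_tendsto_atTop
    have h1 : Filter.Tendsto (fun k : ℕ => ((k : ℝ) + 1)) Filter.atTop Filter.atTop :=
      Filter.tendsto_atTop_add_const_right _ 1 tendsto_natCast_atTop_atTop
    exact (Filter.tendsto_pow_atTop two_ne_zero).comp h1
  refine tendsto_of_le_liminf_of_limsup_le ?_ ?_ (by isBoundedDefault) (by isBoundedDefault)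
  · exact Filter.le_liminf_of_le (by isBoundedDefault)
      (Filter.Eventually.of_forall fun k => iInf_le F (x k))
  · rw [le_iInf_iff]
    intro z
    rcases eq_or_ne (F z) ⊤ with hz | hz
    · rw [hz]; exact le_top
    · lift F z to ℝ using ⟨hz, hbot z⟩ with r hr
      have hg0 : Filter.Tendsto (fun k : ℕ =>
          C * (a * (Fx1 - r) + ‖u - z‖ ^ 2 + ∑ j ∈ Finset.Icc 2 (k + 1), s j)
            / ((k : ℝ) + 1) ^ 2) Filter.atTop (nhds 0) := by
        have h1 := (hinv.const_mul (C * (a * (Fx1 - r) + ‖u - z‖ ^ 2))).add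
          (hlim.const_mul C)
        simp only [mul_zero, add_zero] at h1
        convert h1 using 1
        funext k
        simp only [div_eq_mul_inv]
        ring
      have hg : Filter.Tendsto (fun k : ℕ =>
          ((r + C * (a * (Fx1 - r) + ‖u - z‖ ^ 2 + ∑ j ∈ Finset.Icc 2 (k + 1), s j)
            / ((k : ℝ) + 1) ^ 2 : ℝ) : EReal)) Filter.atTop (nhds (r : EReal)) := by
        rw [EReal.tendsto_coe]
        have := (tendsto_const_nhds (x := r) (f := Filter.atTop (α := ℕ))).add hg0
        simpa using this
      have hle : Filter.limsup (fun k : ℕ => F (x (k + 1))) Filter.atTop ≤ (r : EReal) := by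
        rw [← hg.limsup_eq]
        apply Filter.limsup_le_limsup
        · filter_upwards [Filter.eventually_ge_atTop 1] with k hk
          exact hmain z r hr.symm k hk
        · isBoundedDefault
        · isBoundedDefault
      calc Filter.limsup (fun k : ℕ => F (x k)) Filter.atTop
          = Filter.limsup (fun k : ℕ => F (x (k + 1))) Filter.atTop :=
            (Filter.limsup_nat_add (fun k => F (x k)) 1).symm
        _ ≤ (r : EReal) := hle
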